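/- For any Okada half arc-diagram H of rank N, the propagating label set PropLab(H) (the set of height labels of its propagating half arcs) is a Fibonacci set of rank N. -/

import Mathlib

/-- `S` is a Fibonacci set of rank `N`: a subset of `{1,…,N}` whose cardinality has the
same parity as `N`, and whose `ℓ`-th smallest element (1-indexed) has the same parity as `ℓ`. -/
def IsFibSet (N : ℕ) (S : Finset ℕ) : Prop :=
  S ⊆ Finset.Icc 1 N ∧ S.card % 2 = N % 2 ∧
    ∀ i < S.card, ((S.sort (· ≤ ·)).getD i 0) % 2 = (i + 1) % 2

/-- An Okada half arc-diagram of rank `N`: a non-crossing partial matching of the points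
`{1, …, N}` (`pair a = a` meaning the point `a` carries a propagating half arc, and
`pair a = b ≠ a` meaning a full arc `{a, b}`), together with height labels.  Each arc's
height is at least `1`, at most its minimal endpoint, of the same parity as that minimal
endpoint, and heights strictly increase under nesting (a full arc is nested in a full
arc surrounding it; any arc strictly to the right of a half arc is nested in it;
no half arc point may lie strictly inside a full arc). -/
structure OkadaHalfDiagram (N : ℕ) where
  pair : ℕ → ℕ
  height : ℕ → ℕ
  pair_mem : ∀ a ∈ Finset.Icc 1 N, pair a ∈ Finset.Icc 1 N
  pair_invol : ∀ a ∈ Finset.Icc 1 N, pair (pair a) = a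
  noncross : ∀ a b, a ∈ Finset.Icc 1 N → b ∈ Finset.Icc 1 N →
    a < pair a → b < pair b → ¬(a < b ∧ b < pair a ∧ pair a < pair b)
  half_not_inside : ∀ a c, a ∈ Finset.Icc 1 N → c ∈ Finset.Icc 1 N →
    pair a = a → c < pair c → ¬(c < a ∧ a < pair c)
  height_pos : ∀ a ∈ Finset.Icc 1 N, 1 ≤ height a
  height_le : ∀ a ∈ Finset.Icc 1 N, height a ≤ min a (pair a)
  height_parity : ∀ a ∈ Finset.Icc 1 N, height a % 2 = (min a (pair a)) % 2
  height_pair : ∀ a ∈ Finset.Icc 1 N, height (pair a) = height a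
  nested_full_full : ∀ a c, a ∈ Finset.Icc 1 N → c ∈ Finset.Icc 1 N →
    a < pair a → c < pair c → c < a → pair a < pair c → height c < height a
  nested_half_half : ∀ a c, a ∈ Finset.Icc 1 N → c ∈ Finset.Icc 1 N →
    pair a = a → pair c = c → c < a → height c < height a
  nested_full_half : ∀ a c, a ∈ Finset.Icc 1 N → c ∈ Finset.Icc 1 N →
    a < pair a → pair c = c → c < a → height c < height a

/-- The propagating label set of an Okada half arc-diagram: the set of height labels of
its propagating half arcs. -/
def propLab {N : ℕ} (H : OkadaHalfDiagram N) : Finset ℕ :=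
  ((Finset.Icc 1 N).filter (fun a => H.pair a = a)).image H.height

lemma even_card_of_invol (s : Finset ℕ) (f : ℕ → ℕ)
    (h1 : ∀ a ∈ s, f a ∈ s) (h2 : ∀ a ∈ s, f (f a) = a) (h3 : ∀ a ∈ s, f a ≠ a) :
    Even s.card := by
  induction s using Finset.strongInduction with
  | _ s ih =>
    rcases s.eq_empty_or_nonempty with rfl | ⟨a, ha⟩
    · simp
    · have hfa : f a ∈ s := h1 a ha
      have hne : f a ≠ a := h3 a ha
      set s' := (s.erase a).erase (f a) with hs'
      have hmem : ∀ b, b ∈ s' ↔ b ∈ s ∧ b ≠ a ∧ b ≠ f a := by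
        intro b
        simp [hs', Finset.mem_erase]
        tauto
      have hsub : s' ⊂ s := by
        constructor
        · intro b hb; exact ((hmem b).1 hb).1
        · intro hcon
          have := (hmem a).1 (hcon ha)
          tauto
      have hcard : s.card = s'.card + 2 := by
        have h1' : (s.erase a).card = s.card - 1 := Finset.card_erase_of_mem ha
        have h2' : s'.card = (s.erase a).card - 1 :=
          Finset.card_erase_of_mem (Finset.mem_erase.mpr ⟨hne, hfa⟩)
        have : 1 ≤ s.card := Finset.card_pos.mpr ⟨a, ha⟩
        have : 2 ≤ s.card := by
          have : ({f a, a} : Finset ℕ) ⊆ s := by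
            intro x hx; simp at hx; rcases hx with rfl | rfl <;> assumption
          have := Finset.card_le_card this
          rwa [Finset.card_insert_of_notMem (by simpa using hne), Finset.card_singleton] at this
        omega
      have hE : Even s'.card := by
        apply ih s' hsub
        · intro b hb
          obtain ⟨hbs, hba, hbfa⟩ := (hmem b).1 hb
          refine (hmem (f b)).2 ⟨h1 b hbs, ?_, ?_⟩
          · intro h; apply hbfa; rw [← h2 b hbs, h]
          · intro h; apply hba; rw [← h2 b hbs, h, h2 a ha]
        · intro b hb; exact h2 b ((hmem b).1 hb).1
        · intro b hb; exact h3 b ((hmem b).1 hb).1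
      rw [hcard]
      exact hE.add even_two

lemma sort_image_of_strictMonoOn (s : Finset ℕ) (f : ℕ → ℕ)
    (hf : ∀ a ∈ s, ∀ b ∈ s, a < b → f a < f b) :
    (s.image f).sort (· ≤ ·) = (s.sort (· ≤ ·)).map f := by
  have hinj : Set.InjOn f s := by
    intro a ha b hb hab
    by_contra h
    rcases lt_or_gt_of_ne h with h' | h'
    · exact absurd hab (ne_of_lt (hf a ha b hb h'))
    · exact absurd hab.symm (ne_of_lt (hf b hb a ha h'))
  refine (fun hp h1 h2 => List.Perm.eq_of_sortedLE h1 h2 hp) ?_ ?_ ?_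
  · have h1 : ((s.image f).sort (· ≤ ·) : Multiset ℕ) = (s.image f).val :=
      Finset.sort_eq _ _
    have h2 : (((s.sort (· ≤ ·)).map f : List ℕ) : Multiset ℕ) = s.val.map f := by
      rw [← Multiset.map_coe, Finset.sort_eq]
    rw [← Multiset.coe_eq_coe, h1, h2, Finset.image_val_of_injOn hinj]
  · exact (Finset.pairwise_sort _ _).sortedLE
  · have hs : ((s.sort (· ≤ ·)).map f).Pairwise (· < ·) := by
      rw [List.pairwise_map]
      refine (Finset.sortedLT_sort s).pairwise.imp_of_mem ?_
      intro a b ha hb hab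
      exact hf a ((Finset.mem_sort _).1 ha) b ((Finset.mem_sort _).1 hb) hab
    exact hs.sortedLT.sortedLE

lemma countP_lt_sorted (L : List ℕ) (hL : L.Pairwise (· < ·)) (i : ℕ) (hi : i < L.length) :
    L.countP (fun x => decide (x < L[i])) = i := by
  have hp : L.Pairwise (· < ·) := hL
  rw [List.pairwise_iff_getElem] at hp
  obtain ⟨b, hb⟩ : ∃ b, L[i] = b := ⟨_, rfl⟩
  rw [hb]
  rw [← List.take_append_drop i L, List.countP_append]
  have h1 : (L.take i).countP (fun x => decide (x < b)) = i := by
    rw [List.countP_eq_length.2, List.length_take]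
    · omega
    · intro x hx
      obtain ⟨j, hj, hjx⟩ := List.mem_iff_getElem.1 hx
      rw [List.length_take] at hj
      have : (L.take i)[j] = L[j] := List.getElem_take
      simp only [decide_eq_true_eq]
      rw [← hjx, this, ← hb]
      exact hp j i (by omega) hi (by omega)
  have h2 : (L.drop i).countP (fun x => decide (x < b)) = 0 := by
    rw [List.countP_eq_zero]
    intro x hx
    obtain ⟨j, hj, hjx⟩ := List.mem_iff_getElem.1 hx
    rw [List.length_drop] at hj
    have hd : (L.drop i)[j] = L[i + j] := List.getElem_drop
    simp only [decide_eq_true_eq] at *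
    rw [← hjx, hd]
    rcases Nat.eq_zero_or_pos j with h | h
    · subst h
      simp only [Nat.add_zero]
      omega
    · have := hp i (i + j) hi (by omega) (by omega)
      omega
  simp [h1, h2]

/-- The propagating label set of any Okada half arc-diagram of rank `N` is a Fibonacci
set of rank `N`. -/
theorem propLab_isFibSet (N : ℕ) (H : OkadaHalfDiagram N) : IsFibSet N (propLab H) := by
  classical
  set I := Finset.Icc 1 N with hI
  set F := I.filter (fun a => H.pair a = a) with hF
  set M := I.filter (fun a => ¬ H.pair a = a) with hM
  have hmemF : ∀ a, a ∈ F ↔ a ∈ I ∧ H.pair a = a := by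
    intro a; rw [hF, Finset.mem_filter]
  have hmemM : ∀ a, a ∈ M ↔ a ∈ I ∧ H.pair a ≠ a := by
    intro a; rw [hM, Finset.mem_filter]
  -- strict monotonicity of height on F
  have hmono : ∀ a ∈ F, ∀ b ∈ F, a < b → H.height a < H.height b := by
    intro a ha b hb hab
    rw [hmemF] at ha hb
    exact H.nested_half_half b a hb.1 ha.1 hb.2 ha.2 hab
  have hinj : Set.InjOn H.height F := by
    intro a ha b hb hab
    by_contra h
    rcases lt_or_gt_of_ne h with h' | h'
    · exact absurd hab (ne_of_lt (hmono a ha b hb h'))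
    · exact absurd hab.symm (ne_of_lt (hmono b hb a ha h'))
  have hprop : propLab H = F.image H.height := rfl
  -- full arcs stay on one side of any half-arc point
  have hside : ∀ c ∈ F, ∀ b ∈ I, H.pair b ≠ b → b < c → H.pair b < c := by
    intro c hc b hb hbne hbc
    rw [hmemF] at hc
    have hne : H.pair b ≠ c := by
      intro h
      have h1 := H.pair_invol b hb
      rw [h, hc.2] at h1
      omega
    rcases lt_or_gt_of_ne hne with h' | h'
    · exact h'
    · exfalso
      have hblt : b < H.pair b := by omega
      exact H.half_not_inside c b hc.1 hb hc.2 hblt ⟨hbc, h'⟩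
  -- pair is an involution on M (and on its truncations)
  have hMinv : ∀ b ∈ M, H.pair b ∈ M := by
    intro b hb
    rw [hmemM] at hb ⊢
    refine ⟨H.pair_mem b hb.1, ?_⟩
    intro h
    have h1 := H.pair_invol b hb.1
    rw [h] at h1
    exact hb.2 (by rw [h1] at h; exact h1 ▸ h)
  have hIcard : I.card = N := by rw [hI, Nat.card_Icc]; omega
  have hsplitI : F.card + M.card = I.card :=
    Finset.card_filter_add_card_filter_not (p := fun a => H.pair a = a)
  have hMeven : Even M.card := by
    apply even_card_of_invol M H.pair hMinv
    · intro b hb; exact H.pair_invol b ((hmemM b).1 hb).1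
    · intro b hb; exact ((hmemM b).1 hb).2
  have hcardProp : (propLab H).card = F.card := by
    rw [hprop]; exact Finset.card_image_of_injOn hinj
  refine ⟨?_, ?_, ?_⟩
  · -- subset
    rw [hprop]
    intro h hh
    obtain ⟨a, ha, rfl⟩ := Finset.mem_image.1 hh
    rw [hmemF] at ha
    have h1 := H.height_pos a ha.1
    have h2 := H.height_le a ha.1
    rw [ha.2, min_self] at h2
    have ha2 := Finset.mem_Icc.1 ha.1
    exact Finset.mem_Icc.2 ⟨h1, le_trans h2 ha2.2⟩
  · -- cardinality parity
    rw [hcardProp]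
    obtain ⟨m, hm⟩ := hMeven
    omega
  · -- element parities
    intro i hi
    rw [hcardProp] at hi
    have hsort : (propLab H).sort (· ≤ ·) = (F.sort (· ≤ ·)).map H.height := by
      rw [hprop]; exact sort_image_of_strictMonoOn F H.height hmono
    set L := F.sort (· ≤ ·) with hL
    have hlen : L.length = F.card := Finset.length_sort _
    have hiL : i < L.length := by omega
    have hgetD : ((propLab H).sort (· ≤ ·)).getD i 0 = H.height L[i] := by
      rw [hsort, List.getD_eq_getElem _ _ (by simpa using hiL), List.getElem_map]
    rw [hgetD]
    set a := L[i] with ha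
    have haF : a ∈ F := (Finset.mem_sort _).1 (List.getElem_mem hiL)
    have haI : a ∈ I := ((hmemF a).1 haF).1
    have hafix : H.pair a = a := ((hmemF a).1 haF).2
    have haN : 1 ≤ a ∧ a ≤ N := by rw [hI, Finset.mem_Icc] at haI; exact haI
    -- height parity equals point parity
    have hhp : H.height a % 2 = a % 2 := by
      have := H.height_parity a haI
      rwa [hafix, min_self] at this
    rw [hhp]
    -- number of fixed points below a is i
    have hcntF : (F.filter (fun x => x < a)).card = i := by
      have h1 : (F.filter (fun x => x < a)).card
          = Multiset.countP (fun x => x < a) F.val := by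
        rw [Multiset.countP_eq_card_filter]; rfl
      have h2 : (F.val : Multiset ℕ) = (L : Multiset ℕ) := (Finset.sort_eq _ _).symm
      rw [h1, h2, Multiset.coe_countP]
      exact countP_lt_sorted L (Finset.sortedLT_sort F).pairwise i hiL
    -- number of matched points below a is even
    have hcntM : Even ((M.filter (fun x => x < a)).card) := by
      apply even_card_of_invol _ H.pair
      · intro b hb
        rw [Finset.mem_filter] at hb ⊢
        exact ⟨hMinv b hb.1, hside a haF b ((hmemM b).1 hb.1).1 ((hmemM b).1 hb.1).2 hb.2⟩
      · intro b hb
        rw [Finset.mem_filter] at hb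
        exact H.pair_invol b ((hmemM b).1 hb.1).1
      · intro b hb
        rw [Finset.mem_filter] at hb
        exact ((hmemM b).1 hb.1).2
    -- points below a in I
    have hcntI : (I.filter (fun x => x < a)).card = a - 1 := by
      have : I.filter (fun x => x < a) = Finset.Ico 1 a := by
        ext b
        rw [Finset.mem_filter, hI, Finset.mem_Icc, Finset.mem_Ico]
        omega
      rw [this, Nat.card_Ico]
    have hsplit : (F.filter (fun x => x < a)).card + (M.filter (fun x => x < a)).card
        = (I.filter (fun x => x < a)).card := by
      have e1 : F.filter (fun x => x < a)
          = (I.filter (fun x => x < a)).filter (fun b => H.pair b = b) :=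
        Finset.filter_comm _ _ _
      have e2 : M.filter (fun x => x < a)
          = (I.filter (fun x => x < a)).filter (fun b => ¬ H.pair b = b) :=
        Finset.filter_comm _ _ _
      rw [e1, e2]
      exact Finset.card_filter_add_card_filter_not (p := fun b => H.pair b = b)
    obtain ⟨m, hm⟩ := hcntM
    omega
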